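/- arXiv:1809.05453 — 3 statements merged into one kernel-verified Lean document; each statement's English description precedes it below -/
import Mathlib

section
/- Let (Ω, μ) be a probability space, G a finite simple graph, and for each vertex x of G let B_x ⊆ Ω be a measurable set. Then ∑_{x ∈ V(G)} μ(B_x) − ∑_{{x,y} ∈ E(G)} μ(B_x ∩ B_y) ≤ α(G) · μ(⋃_{x ∈ V(G)} B_x). -/
open MeasureTheory

open scoped Classical in
lemma key_count {V : Type*} [Fintype V] (G : SimpleGraph V) [Fintype G.edgeSet] (α : ℕ)
    (hub : ∀ T : Finset V, (T : Set V).Pairwise (fun a b => ¬ G.Adj a b) → T.card ≤ α) :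
    ∀ S : Finset V, S.card ≤ α + (G.edgeFinset.filter (fun e => ∀ v ∈ e, v ∈ S)).card := by
  intro S
  induction S using Finset.strongInduction with
  | _ S ih =>
    by_cases hp : (S : Set V).Pairwise (fun a b => ¬ G.Adj a b)
    · exact le_add_right (hub S hp)
    · simp only [Set.Pairwise, not_forall] at hp
      obtain ⟨x, hx, y, hy, hxy, hadj⟩ := hp
      simp only [not_not] at hadj
      have hxS : x ∈ S := hx
      have hyS : y ∈ S := hy
      have hsub : (G.edgeFinset.filter (fun e => ∀ v ∈ e, v ∈ S.erase x)) ⊂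
          (G.edgeFinset.filter (fun e => ∀ v ∈ e, v ∈ S)) := by
        constructor
        · intro e he
          simp only [Finset.mem_filter] at he ⊢
          exact ⟨he.1, fun v hv => Finset.mem_of_mem_erase (he.2 v hv)⟩
        · intro hcon
          have hmem : s(x, y) ∈ G.edgeFinset.filter (fun e => ∀ v ∈ e, v ∈ S) := by
            simp only [Finset.mem_filter, SimpleGraph.mem_edgeFinset, SimpleGraph.mem_edgeSet]
            refine ⟨hadj, fun v hv => ?_⟩
            rcases Sym2.mem_iff.1 hv with rfl | rfl
            · exact hxS
            · exact hyS
          have := hcon hmem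
          simp only [Finset.mem_filter] at this
          have := this.2 x (Sym2.mem_mk_left x y)
          exact (Finset.notMem_erase x S) this
      have hlt := Finset.card_lt_card hsub
      have hih := ih (S.erase x) (Finset.erase_ssubset hxS)
      have hcard : (S.erase x).card + 1 = S.card := Finset.card_erase_add_one hxS
      omega

/-- For a probability measure `μ`, a finite simple graph `G` and measurable sets `B x`
indexed by the vertices: `∑_x μ(B x) − ∑_{{x,y} ∈ E(G)} μ(B x ∩ B y) ≤ α(G) · μ(⋃ x, B x)`. -/
theorem stmt_3 {Ω : Type*} [MeasurableSpace Ω] (μ : Measure Ω) [IsProbabilityMeasure μ]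
    {V : Type*} [Fintype V] (G : SimpleGraph V) [Fintype G.edgeSet]
    (B : V → Set Ω) (hB : ∀ x, MeasurableSet (B x))
    (α : ℕ)
    (hα : IsGreatest {n : ℕ | ∃ T : Finset V,
      (T : Set V).Pairwise (fun a b => ¬ G.Adj a b) ∧ T.card = n} α) :
    ∑ x : V, (μ (B x)).toReal
      - ∑ e ∈ G.edgeFinset,
          Sym2.lift ⟨fun x y => (μ (B x ∩ B y)).toReal,
            fun x y => by simp only []; rw [Set.inter_comm]⟩ e
      ≤ (α : ℝ) * (μ (⋃ x : V, B x)).toReal := by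
  classical
  have hub : ∀ T : Finset V, (T : Set V).Pairwise (fun a b => ¬ G.Adj a b) → T.card ≤ α :=
    fun T hT => hα.2 ⟨T, hT, rfl⟩
  -- pointwise functions
  set lift2 : Sym2 V → Ω → ℝ := fun e ω =>
    Sym2.lift ⟨fun x y => Set.indicator (B x ∩ B y) (fun _ => (1:ℝ)) ω,
      fun x y => by simp only []; rw [Set.inter_comm]⟩ e with hlift2
  have hBU : MeasurableSet (⋃ x : V, B x) := MeasurableSet.iUnion (fun x => hB x)
  -- integrability helpers
  have hint1 : Integrable (fun ω => ∑ x : V, Set.indicator (B x) (fun _ => (1:ℝ)) ω) μ :=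
    integrable_finset_sum _ (fun x _ => (integrable_const (1:ℝ)).indicator (hB x))
  have hint2 : Integrable (fun ω => ∑ e ∈ G.edgeFinset, lift2 e ω) μ := by
    refine integrable_finset_sum _ (fun e _ => ?_)
    induction e using Sym2.ind with
    | _ x y =>
      simp only [hlift2, Sym2.lift_mk]
      exact (integrable_const (1:ℝ)).indicator ((hB x).inter (hB y))
  -- express LHS sums as integrals
  have h1 : ∑ x : V, (μ (B x)).toReal
      = ∫ ω, ∑ x : V, Set.indicator (B x) (fun _ => (1:ℝ)) ω ∂μ := by
    rw [integral_finset_sum _ (fun x _ => (integrable_const (1:ℝ)).indicator (hB x))]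
    refine Finset.sum_congr rfl (fun x _ => ?_)
    rw [integral_indicator_const (1:ℝ) (hB x), smul_eq_mul, mul_one]
    rfl
  have h2 : ∑ e ∈ G.edgeFinset,
          Sym2.lift ⟨fun x y => (μ (B x ∩ B y)).toReal,
            fun x y => by simp only []; rw [Set.inter_comm]⟩ e
      = ∫ ω, ∑ e ∈ G.edgeFinset, lift2 e ω ∂μ := by
    rw [integral_finset_sum _ (fun e _ => ?_)]
    · refine Finset.sum_congr rfl (fun e _ => ?_)
      induction e using Sym2.ind with
      | _ x y =>
        simp only [hlift2, Sym2.lift_mk]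
        rw [integral_indicator_const (1:ℝ) ((hB x).inter (hB y)), smul_eq_mul, mul_one]
        rfl
    · induction e using Sym2.ind with
      | _ x y =>
        simp only [hlift2, Sym2.lift_mk]
        exact (integrable_const (1:ℝ)).indicator ((hB x).inter (hB y))
  have h3 : (α : ℝ) * (μ (⋃ x : V, B x)).toReal
      = ∫ ω, Set.indicator (⋃ x : V, B x) (fun _ => (α : ℝ)) ω ∂μ := by
    rw [integral_indicator_const ((α : ℝ)) hBU, smul_eq_mul, mul_comm]
    rfl
  rw [h1, h2, h3, ← integral_sub hint1 hint2]
  refine integral_mono (hint1.sub hint2)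
    ((integrable_const ((α:ℝ))).indicator hBU) (fun ω => ?_)
  -- pointwise inequality
  simp only [Pi.sub_apply]
  set S : Finset V := Finset.univ.filter (fun x => ω ∈ B x) with hS
  have hsum1 : ∑ x : V, Set.indicator (B x) (fun _ => (1:ℝ)) ω = (S.card : ℝ) := by
    rw [hS, Finset.card_filter]
    push_cast
    refine Finset.sum_congr rfl (fun x _ => ?_)
    simp [Set.indicator_apply]
  have hsum2 : ∑ e ∈ G.edgeFinset, lift2 e ω
      = ((G.edgeFinset.filter (fun e => ∀ v ∈ e, v ∈ S)).card : ℝ) := by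
    rw [Finset.card_filter]
    push_cast
    refine Finset.sum_congr rfl (fun e _ => ?_)
    induction e using Sym2.ind with
    | _ x y =>
      simp only [hlift2, Sym2.lift_mk, Set.indicator_apply, Set.mem_inter_iff]
      have hiff : (∀ v ∈ s(x, y), v ∈ S) ↔ (ω ∈ B x ∧ ω ∈ B y) := by
        simp [Sym2.mem_iff, hS]
      rw [if_congr hiff.symm rfl rfl]
  rw [hsum1, hsum2]
  by_cases hω : ω ∈ ⋃ x : V, B x
  · rw [Set.indicator_of_mem hω]
    have hk := key_count G α hub S
    have : (S.card : ℝ) ≤ (α : ℝ)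
        + ((G.edgeFinset.filter (fun e => ∀ v ∈ e, v ∈ S)).card : ℝ) := by
      exact_mod_cast hk
    linarith
  · rw [Set.indicator_of_notMem hω]
    have hSe : S = ∅ := by
      rw [hS, Finset.filter_eq_empty_iff]
      intro x _ hx
      exact hω (Set.mem_iUnion.2 ⟨x, hx⟩)
    rw [hSe]
    simp
end

section
/- Let (Ω, μ) be a probability space and (B_x)_{x ∈ I} a finite family of measurable subsets of Ω such that any four distinct sets among them have empty intersection. Then ∑_{x ∈ I} μ(B_x) ≤ 2 μ(⋃_{x ∈ I} B_x) + ∑_{{x,y,z} ⊆ I distinct} μ(B_x ∩ B_y ∩ B_z). -/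
open MeasureTheory

lemma aux_pointwise {Ω : Type*} {ι : Type*} [Fintype ι] [DecidableEq ι]
    (B : ι → Set Ω)
    (h4 : ∀ x₁ x₂ x₃ x₄ : ι, x₁ ≠ x₂ → x₁ ≠ x₃ → x₁ ≠ x₄ → x₂ ≠ x₃ → x₂ ≠ x₄ → x₃ ≠ x₄ →
      B x₁ ∩ B x₂ ∩ B x₃ ∩ B x₄ = ∅) (ω : Ω) :
    (∑ x : ι, (B x).indicator (fun _ => (1:ℝ)) ω)
      ≤ 2 * (⋃ x : ι, B x).indicator (fun _ => (1:ℝ)) ω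
        + ∑ s ∈ Finset.univ.powersetCard 3,
            (⋂ x ∈ s, B x).indicator (fun _ => (1:ℝ)) ω := by
  classical
  set T : Finset ι := Finset.univ.filter (fun x => ω ∈ B x) with hT
  have hmemT : ∀ x, x ∈ T ↔ ω ∈ B x := by
    intro x; simp [hT]
  -- T.card ≤ 3
  have hcard : T.card ≤ 3 := by
    by_contra h
    push_neg at h
    obtain ⟨t, hts, htc⟩ := Finset.exists_subset_card_eq (s := T) (n := 4) h
    have hnd := t.nodup
    have hlen : t.toList.length = 4 := by rw [Finset.length_toList, htc]
    have hndl : t.toList.Nodup := t.nodup_toList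
    have hmem : ∀ x ∈ t.toList, ω ∈ B x := by
      intro x hx
      exact (hmemT x).1 (hts (by simpa using hx))
    match hl : t.toList, hlen, hndl, hmem with
    | [a, b, c, d], _, hndl, hmem =>
      simp only [List.nodup_cons, List.mem_cons, List.not_mem_nil, or_false,
        List.mem_singleton, not_or, List.nodup_nil, and_true] at hndl
      have h1 : ω ∈ B a := hmem a (by simp)
      have h2 : ω ∈ B b := hmem b (by simp)
      have h3 : ω ∈ B c := hmem c (by simp)
      have h4' : ω ∈ B d := hmem d (by simp)
      have := h4 a b c d hndl.1.1 hndl.1.2.1 hndl.1.2.2 hndl.2.1.1 hndl.2.1.2 hndl.2.2.1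
      have hmem4 : ω ∈ B a ∩ B b ∩ B c ∩ B d := ⟨⟨⟨h1, h2⟩, h3⟩, h4'⟩
      rw [this] at hmem4
      exact hmem4
  -- LHS = T.card
  have hLHS : (∑ x : ι, (B x).indicator (fun _ => (1:ℝ)) ω) = T.card := by
    rw [hT]
    simp [Set.indicator_apply, Finset.sum_boole]
  -- triple sum = choose T.card 3
  have hTriple : (∑ s ∈ Finset.univ.powersetCard 3,
      (⋂ x ∈ s, B x).indicator (fun _ => (1:ℝ)) ω) = (T.card.choose 3 : ℝ) := by
    have : ∀ s : Finset ι, (ω ∈ ⋂ x ∈ s, B x) ↔ s ⊆ T := by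
      intro s
      simp only [Set.mem_iInter]
      constructor
      · intro h x hx; exact (hmemT x).2 (h x hx)
      · intro h x hx; exact (hmemT x).1 (h hx)
    calc (∑ s ∈ Finset.univ.powersetCard 3, (⋂ x ∈ s, B x).indicator (fun _ => (1:ℝ)) ω)
        = ∑ s ∈ Finset.univ.powersetCard 3, if s ⊆ T then (1:ℝ) else 0 := by
          refine Finset.sum_congr rfl fun s _ => ?_
          simp [Set.indicator_apply, this s]
      _ = ((Finset.univ.powersetCard 3).filter (fun s => s ⊆ T)).card := by
          rw [Finset.sum_boole]
      _ = (T.powersetCard 3).card := by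
          norm_cast
          apply congrArg Finset.card
          ext s
          simp [Finset.mem_powersetCard, and_comm]
      _ = (T.card.choose 3 : ℝ) := by rw [Finset.card_powersetCard]
  rw [hLHS, hTriple]
  -- union indicator
  by_cases hU : ω ∈ ⋃ x : ι, B x
  · have hUi : (⋃ x : ι, B x).indicator (fun _ => (1:ℝ)) ω = 1 := by
      simp [Set.indicator_apply, hU]
    rw [hUi]
    interval_cases h : T.card <;> norm_num [Nat.choose]
  · have hT0 : T = ∅ := by
      ext x
      simp only [Finset.notMem_empty, iff_false, hmemT]
      intro hx
      exact hU (Set.mem_iUnion.2 ⟨x, hx⟩)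
    simp [hT0, Set.indicator_apply, hU]

/-- If any four distinct sets among the `B x` have empty intersection, then
`∑ μ(B x) ≤ 2 μ(⋃ B x) + ∑_{triples} μ(B x ∩ B y ∩ B z)`. -/
theorem stmt_10 {Ω : Type*} [MeasurableSpace Ω] (μ : Measure Ω) [IsProbabilityMeasure μ]
    {ι : Type*} [Fintype ι] [DecidableEq ι]
    (B : ι → Set Ω) (hB : ∀ x, MeasurableSet (B x))
    (h4 : ∀ x₁ x₂ x₃ x₄ : ι, x₁ ≠ x₂ → x₁ ≠ x₃ → x₁ ≠ x₄ → x₂ ≠ x₃ → x₂ ≠ x₄ → x₃ ≠ x₄ →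
      B x₁ ∩ B x₂ ∩ B x₃ ∩ B x₄ = ∅) :
    ∑ x : ι, (μ (B x)).toReal
      ≤ 2 * (μ (⋃ x : ι, B x)).toReal
        + ∑ s ∈ Finset.univ.powersetCard 3, (μ (⋂ x ∈ s, B x)).toReal := by
  classical
  have hUm : MeasurableSet (⋃ x : ι, B x) := MeasurableSet.iUnion fun x => hB x
  have hIm : ∀ s : Finset ι, MeasurableSet (⋂ x ∈ s, B x) := fun s =>
    MeasurableSet.biInter (s.countable_toSet) fun x _ => hB x
  have hint : ∀ (s : Set Ω), MeasurableSet s →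
      Integrable (s.indicator (fun _ => (1:ℝ))) μ :=
    fun s hs => (integrable_const 1).indicator hs
  have hL : ∀ (s : Set Ω), MeasurableSet s →
      ∫ ω, s.indicator (fun _ => (1:ℝ)) ω ∂μ = (μ s).toReal := fun s hs =>
    integral_indicator_one hs
  calc ∑ x : ι, (μ (B x)).toReal
      = ∫ ω, ∑ x : ι, (B x).indicator (fun _ => (1:ℝ)) ω ∂μ := by
        rw [integral_finset_sum _ (fun x _ => hint _ (hB x))]
        exact (Finset.sum_congr rfl fun x _ => (hL _ (hB x)).symm)
    _ ≤ ∫ ω, (2 * (⋃ x : ι, B x).indicator (fun _ => (1:ℝ)) ω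
          + ∑ s ∈ Finset.univ.powersetCard 3,
              (⋂ x ∈ s, B x).indicator (fun _ => (1:ℝ)) ω) ∂μ := by
        refine integral_mono ?_ ?_ (fun ω => aux_pointwise B h4 ω)
        · exact integrable_finset_sum _ (fun x _ => hint _ (hB x))
        · exact (((hint _ hUm).const_mul 2).add
            (integrable_finset_sum _ (fun s _ => hint _ (hIm s))))
    _ = 2 * (μ (⋃ x : ι, B x)).toReal
        + ∑ s ∈ Finset.univ.powersetCard 3, (μ (⋂ x ∈ s, B x)).toReal := by
        rw [integral_add (((hint _ hUm).const_mul 2))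
          (integrable_finset_sum _ (fun s _ => hint _ (hIm s))),
          integral_const_mul, hL _ hUm,
          integral_finset_sum _ (fun s _ => hint _ (hIm s))]
        congr 1
        exact Finset.sum_congr rfl fun s _ => hL _ (hIm s)
end

section
/- Consider the seven points V₁ = (0,0), V₂ = (√3/2, 1/2), V₃ = (√3/2, −1/2), V₄ = (√3, 0), V₅ = (1, 0), V₆ = (√3/2 + 1, 1/2), V₇ = (√3/2 + 1, −1/2) in ℝ², with the unit distance graph structure (edges are pairs at Euclidean distance 1). The independence number of this graph is exactly 3. -/
lemma dist2 (x y : EuclideanSpace ℝ (Fin 2)) :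
    dist x y = Real.sqrt ((x 0 - y 0) ^ 2 + (x 1 - y 1) ^ 2) := by
  rw [EuclideanSpace.dist_eq, Fin.sum_univ_two]
  simp [Real.dist_eq, sq_abs]

lemma dist2_one {x y : EuclideanSpace ℝ (Fin 2)}
    (h : (x 0 - y 0) ^ 2 + (x 1 - y 1) ^ 2 = 1) : dist x y = 1 := by
  rw [dist2, h, Real.sqrt_one]

lemma dist2_ne_one {x y : EuclideanSpace ℝ (Fin 2)}
    (h : (x 0 - y 0) ^ 2 + (x 1 - y 1) ^ 2 ≠ 1) : dist x y ≠ 1 := by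
  rw [dist2]
  intro hd
  apply h
  have h0 : (0:ℝ) ≤ (x 0 - y 0) ^ 2 + (x 1 - y 1) ^ 2 := by positivity
  have := Real.sq_sqrt h0
  rw [hd] at this
  linarith

/-- The independence number of the unit distance graph on the seven points
`V₁,…,V₇` of the configuration `G₁(0)` is exactly 3. -/
theorem stmt_16 :
    let V₁ : EuclideanSpace ℝ (Fin 2) := !₂[0, 0]
    let V₂ : EuclideanSpace ℝ (Fin 2) := !₂[Real.sqrt 3 / 2, 1 / 2]
    let V₃ : EuclideanSpace ℝ (Fin 2) := !₂[Real.sqrt 3 / 2, -(1 / 2)]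
    let V₄ : EuclideanSpace ℝ (Fin 2) := !₂[Real.sqrt 3, 0]
    let V₅ : EuclideanSpace ℝ (Fin 2) := !₂[1, 0]
    let V₆ : EuclideanSpace ℝ (Fin 2) := !₂[Real.sqrt 3 / 2 + 1, 1 / 2]
    let V₇ : EuclideanSpace ℝ (Fin 2) := !₂[Real.sqrt 3 / 2 + 1, -(1 / 2)]
    let Vs : Set (EuclideanSpace ℝ (Fin 2)) := {V₁, V₂, V₃, V₄, V₅, V₆, V₇}
    IsGreatest {n : ℕ | ∃ S : Set (EuclideanSpace ℝ (Fin 2)), S ⊆ Vs ∧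
      S.Pairwise (fun a b => dist a b ≠ 1) ∧ S.ncard = n} 3 := by
  intro V₁ V₂ V₃ V₄ V₅ V₆ V₇ Vs
  have hs : Real.sqrt 3 ^ 2 = 3 := Real.sq_sqrt (by norm_num)
  have hs0 : 0 < Real.sqrt 3 := Real.sqrt_pos.2 (by norm_num)
  have h14 : V₁ ≠ V₄ := by
    intro h
    have h0 : (0:ℝ) = Real.sqrt 3 := congrArg (fun v => v 0) h
    nlinarith
  have h16 : V₁ ≠ V₆ := by
    intro h
    have h0 : (0:ℝ) = Real.sqrt 3 / 2 + 1 := congrArg (fun v => v 0) h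
    nlinarith
  have h46 : V₄ ≠ V₆ := by
    intro h
    have h0 : Real.sqrt 3 = Real.sqrt 3 / 2 + 1 := congrArg (fun v => v 0) h
    nlinarith
  constructor
  · refine ⟨{V₁, V₄, V₆}, ?_, ?_, ?_⟩
    · intro x hx
      simp only [Set.mem_insert_iff, Set.mem_singleton_iff] at hx ⊢
      tauto
    · have d14 : dist V₁ V₄ ≠ 1 := dist2_ne_one (by
        show ((0:ℝ) - Real.sqrt 3) ^ 2 + ((0:ℝ) - 0) ^ 2 ≠ 1
        nlinarith)
      have d16 : dist V₁ V₆ ≠ 1 := dist2_ne_one (by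
        show ((0:ℝ) - (Real.sqrt 3 / 2 + 1)) ^ 2 + ((0:ℝ) - 1 / 2) ^ 2 ≠ 1
        nlinarith)
      have d46 : dist V₄ V₆ ≠ 1 := dist2_ne_one (by
        show (Real.sqrt 3 - (Real.sqrt 3 / 2 + 1)) ^ 2 + ((0:ℝ) - 1 / 2) ^ 2 ≠ 1
        intro h
        have : Real.sqrt 3 = 1 := by nlinarith
        nlinarith)
      intro x hx y hy hxy
      simp only [Set.mem_insert_iff, Set.mem_singleton_iff] at hx hy
      rcases hx with rfl | rfl | rfl <;> rcases hy with rfl | rfl | rfl <;>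
        first
        | exact absurd rfl hxy
        | assumption
        | (rw [dist_comm]; assumption)
    · exact Set.ncard_eq_three.2 ⟨V₁, V₄, V₆, h14, h16, h46, rfl⟩
  · rintro n ⟨S, hSub, hPair, rfl⟩
    have d12 : dist V₁ V₂ = 1 := dist2_one (by
      show ((0:ℝ) - Real.sqrt 3 / 2) ^ 2 + ((0:ℝ) - 1 / 2) ^ 2 = 1
      nlinarith)
    have d13 : dist V₁ V₃ = 1 := dist2_one (by
      show ((0:ℝ) - Real.sqrt 3 / 2) ^ 2 + ((0:ℝ) - -(1 / 2)) ^ 2 = 1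
      nlinarith)
    have d23 : dist V₂ V₃ = 1 := dist2_one (by
      show (Real.sqrt 3 / 2 - Real.sqrt 3 / 2) ^ 2 + ((1:ℝ) / 2 - -(1 / 2)) ^ 2 = 1
      nlinarith)
    have d56 : dist V₅ V₆ = 1 := dist2_one (by
      show ((1:ℝ) - (Real.sqrt 3 / 2 + 1)) ^ 2 + ((0:ℝ) - 1 / 2) ^ 2 = 1
      nlinarith)
    have d57 : dist V₅ V₇ = 1 := dist2_one (by
      show ((1:ℝ) - (Real.sqrt 3 / 2 + 1)) ^ 2 + ((0:ℝ) - -(1 / 2)) ^ 2 = 1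
      nlinarith)
    have d67 : dist V₆ V₇ = 1 := dist2_one (by
      show (Real.sqrt 3 / 2 + 1 - (Real.sqrt 3 / 2 + 1)) ^ 2 + ((1:ℝ) / 2 - -(1 / 2)) ^ 2 = 1
      nlinarith)
    set A : Set (EuclideanSpace ℝ (Fin 2)) := {V₁, V₂, V₃} with hA
    set B : Set (EuclideanSpace ℝ (Fin 2)) := {V₅, V₆, V₇} with hB
    set C : Set (EuclideanSpace ℝ (Fin 2)) := {V₄} with hC
    have hSplit : S = (S ∩ A) ∪ (S ∩ B) ∪ (S ∩ C) := by
      ext x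
      constructor
      · intro hx
        have hxv := hSub hx
        simp only [Vs, Set.mem_insert_iff, Set.mem_singleton_iff] at hxv
        simp only [Set.mem_union, Set.mem_inter_iff, hA, hB, hC,
          Set.mem_insert_iff, Set.mem_singleton_iff]
        tauto
      · rintro ((⟨hx, _⟩ | ⟨hx, _⟩) | ⟨hx, _⟩) <;> exact hx
    have key : ∀ T : Set (EuclideanSpace ℝ (Fin 2)), ∀ a b c : EuclideanSpace ℝ (Fin 2),
        T = {a, b, c} → dist a b = 1 → dist a c = 1 → dist b c = 1 →
        (S ∩ T).ncard ≤ 1 := by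
      intro T a b c hT dab dac dbc
      have hfin : (S ∩ T).Finite := by
        apply Set.Finite.inter_of_right
        rw [hT]
        exact ((Set.finite_singleton c).insert b).insert a
      rw [Set.ncard_le_one_iff hfin]
      intro x y hx hy
      by_contra hne
      have hd := hPair hx.1 hy.1 hne
      have hx2 := hx.2
      have hy2 := hy.2
      rw [hT] at hx2 hy2
      simp only [Set.mem_insert_iff, Set.mem_singleton_iff] at hx2 hy2
      rcases hx2 with rfl | rfl | rfl <;> rcases hy2 with rfl | rfl | rfl <;>
        first
        | exact hne rfl
        | exact hd (by assumption)
        | exact hd (by rw [dist_comm]; assumption)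
    have hAcard := key A V₁ V₂ V₃ rfl d12 d13 d23
    have hBcard := key B V₅ V₆ V₇ rfl d56 d57 d67
    have hCcard : (S ∩ C).ncard ≤ 1 := by
      have hsub : S ∩ C ⊆ {V₄} := fun x hx => hx.2
      calc (S ∩ C).ncard ≤ ({V₄} : Set _).ncard :=
            Set.ncard_le_ncard hsub (Set.finite_singleton V₄)
        _ = 1 := Set.ncard_singleton V₄
    calc S.ncard = ((S ∩ A) ∪ (S ∩ B) ∪ (S ∩ C)).ncard := by rw [← hSplit]
      _ ≤ ((S ∩ A) ∪ (S ∩ B)).ncard + (S ∩ C).ncard := Set.ncard_union_le _ _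
      _ ≤ (S ∩ A).ncard + (S ∩ B).ncard + (S ∩ C).ncard := by
          have := Set.ncard_union_le (S ∩ A) (S ∩ B)
          omega
      _ ≤ 3 := by omega
end
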